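/- For any density matrix ρ on ℂ^d, the quantity √F(ρ, ρᵀ) = Tr√(√ρ ρᵀ √ρ) equals the sum of the singular values of the complex symmetric matrix A with entries A_{ij} = √(p_i p_j) ⟨ψ_i, ψ_j*⟩, where ρ = Σ_i p_i |ψ_i⟩⟨ψ_i| is the spectral decomposition of ρ. Equivalently, A A* equals √ρ ρᵀ √ρ written in the eigenbasis of ρ. -/

import Mathlib

open Matrix
open scoped ComplexOrder

/-- Singular values of a complex square matrix: square roots of eigenvalues of `Aᴴ * A`. -/
noncomputable def singularValues {n : Type*} [Fintype n] [DecidableEq n]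
    (A : Matrix n n ℂ) : n → ℝ :=
  fun i => Real.sqrt ((Matrix.isHermitian_conjTranspose_mul_self A).eigenvalues i)

/-- Trace norm: sum of singular values. -/
noncomputable def traceNorm {n : Type*} [Fintype n] [DecidableEq n]
    (A : Matrix n n ℂ) : ℝ := ∑ i, singularValues A i

/-- Positive-semidefinite square root (zero for non-PSD input). -/
noncomputable def msqrt {n : Type*} [Fintype n] [DecidableEq n]
    (A : Matrix n n ℂ) : Matrix n n ℂ :=
  open scoped Classical in
  if h : A.PosSemidef then (h.1.eigenvectorUnitary : Matrix n n ℂ) *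
      diagonal (fun i => ((Real.sqrt (h.1.eigenvalues i) : ℝ) : ℂ)) *
      (star h.1.eigenvectorUnitary : Matrix n n ℂ) else 0

/-- Root fidelity √F(ρ,σ) = Tr √(√ρ σ √ρ). -/
noncomputable def rootFid {n : Type*} [Fintype n] [DecidableEq n]
    (ρ σ : Matrix n n ℂ) : ℝ := ((msqrt (msqrt ρ * σ * msqrt ρ)).trace).re

/-- A density matrix: positive semidefinite with unit trace. -/
def IsDensity {n : Type*} [Fintype n] [DecidableEq n] (ρ : Matrix n n ℂ) : Prop :=
  ρ.PosSemidef ∧ ρ.trace = 1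

/-- Partial transpose on the second tensor factor. -/
noncomputable def ptB {dA dB : ℕ} (X : Matrix (Fin dA × Fin dB) (Fin dA × Fin dB) ℂ) :
    Matrix (Fin dA × Fin dB) (Fin dA × Fin dB) ℂ :=
  Matrix.of fun p q => X (p.1, q.2) (q.1, p.2)

/-- Hermitian inner product ⟨x,y⟩ = ∑ conj(xᵢ) yᵢ. -/
noncomputable def hinner {ι : Type*} [Fintype ι] (x y : ι → ℂ) : ℂ := ∑ i, star (x i) * y i

/-- Entrywise complex conjugate of a vector. -/
noncomputable def cconj {ι : Type*} (x : ι → ℂ) : ι → ℂ := fun i => star (x i)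

section PSDSqrtPort

open scoped MatrixOrder

noncomputable def Matrix.PosSemidef.sqrt {n : Type*} [Fintype n] [DecidableEq n]
    {A : Matrix n n ℂ} (h : A.PosSemidef) : Matrix n n ℂ :=
  (h.1.eigenvectorUnitary : Matrix n n ℂ) *
      diagonal (fun i => ((Real.sqrt (h.1.eigenvalues i) : ℝ) : ℂ)) *
      (star h.1.eigenvectorUnitary : Matrix n n ℂ)

lemma Matrix.PosSemidef.sqrt_eq_cfcSqrt {n : Type*} [Fintype n] [DecidableEq n]
    {A : Matrix n n ℂ} (h : A.PosSemidef) : h.sqrt = CFC.sqrt A := by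
  rw [CFC.sqrt_eq_cfc, cfc_nnreal_eq_real _ A, h.1.cfc_eq]
  simp [IsHermitian.cfc, Matrix.PosSemidef.sqrt, Function.comp_def,
    max_eq_left (h.eigenvalues_nonneg _)]

lemma Matrix.PosSemidef.posSemidef_sqrt {n : Type*} [Fintype n] [DecidableEq n]
    {A : Matrix n n ℂ} (h : A.PosSemidef) : h.sqrt.PosSemidef := by
  rw [h.sqrt_eq_cfcSqrt]; exact (CFC.sqrt_nonneg A).posSemidef

lemma Matrix.PosSemidef.sqrt_mul_self {n : Type*} [Fintype n] [DecidableEq n]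
    {A : Matrix n n ℂ} (h : A.PosSemidef) : h.sqrt * h.sqrt = A := by
  rw [h.sqrt_eq_cfcSqrt]; exact CFC.sqrt_mul_sqrt_self A h.nonneg

lemma Matrix.PosSemidef.eq_sqrt_of_sq_eq {n : Type*} [Fintype n] [DecidableEq n]
    {A B : Matrix n n ℂ} (hB : B.PosSemidef) (hA : A.PosSemidef) (hsq : B ^ 2 = A) :
    B = hA.sqrt := by
  subst hsq
  rw [hA.sqrt_eq_cfcSqrt, pow_two, CFC.sqrt_mul_self B hB.nonneg]

end PSDSqrtPort

lemma msqrt_of_psd {n : Type*} [Fintype n] [DecidableEq n] {A : Matrix n n ℂ}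
    (h : A.PosSemidef) : msqrt A = h.sqrt := by
  rw [msqrt, dif_pos h]; rfl

lemma trace_sqrt {n : Type*} [Fintype n] [DecidableEq n] {A : Matrix n n ℂ}
    (h : A.PosSemidef) :
    h.sqrt.trace = ∑ i, (Real.sqrt (h.1.eigenvalues i) : ℂ) := by
  rw [Matrix.PosSemidef.sqrt, Matrix.trace_mul_cycle, Unitary.coe_star_mul_self,
    Matrix.one_mul, Matrix.trace_diagonal]

lemma map_star_mul' {n : Type*} [Fintype n] [DecidableEq n] (X Y : Matrix n n ℂ) :
    (X * Y).map star = X.map star * Y.map star := by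
  ext i j
  simp [Matrix.mul_apply, Matrix.map_apply, star_sum]

lemma map_star_of_hermitian {n : Type*} [Fintype n] [DecidableEq n] {X : Matrix n n ℂ}
    (h : X.IsHermitian) : X.map star = Xᵀ := by
  ext i j
  simpa [Matrix.conjTranspose_apply, Matrix.map_apply] using congrFun (congrFun h j) i

/-- √F(ρ,ρᵀ) equals the sum of singular values of the symmetric matrix
A_{ij} = √(p_i p_j) ⟨ψ_i, ψ_j*⟩ built from the spectral decomposition of ρ, and
A A* is √ρ ρᵀ √ρ written in the eigenbasis of ρ. -/
theorem rootfid_singular_values {d : ℕ}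
    (ρ : Matrix (Fin d) (Fin d) ℂ) (hρ : IsDensity ρ)
    (p : Fin d → ℝ) (ψ : Fin d → Fin d → ℂ)
    (hp : ∀ i, 0 ≤ p i)
    (horth : ∀ i j, hinner (ψ i) (ψ j) = if i = j then 1 else 0)
    (hdec : ρ = ∑ i, (p i : ℂ) • Matrix.vecMulVec (ψ i) (cconj (ψ i)))
    (A : Matrix (Fin d) (Fin d) ℂ)
    (hA : ∀ i j, A i j = (Real.sqrt (p i * p j) : ℂ) * hinner (ψ i) (cconj (ψ j))) :
    rootFid ρ ρᵀ = ∑ i, singularValues A i ∧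
    ∀ i j, (A * A.map star) i j
      = hinner (ψ i) ((msqrt ρ * ρᵀ * msqrt ρ).mulVec (ψ j)) := by
  classical
  obtain ⟨hPSD, -⟩ := hρ
  set U : Matrix (Fin d) (Fin d) ℂ := Matrix.of (fun k i => ψ i k) with hU_def
  have hUU : Uᴴ * U = 1 := by
    ext i j
    simpa [Matrix.mul_apply, Matrix.conjTranspose_apply, hinner, hU_def,
      Matrix.one_apply] using horth i j
  have hUUc : U * Uᴴ = 1 := mul_eq_one_comm.mp hUU
  set D : Matrix (Fin d) (Fin d) ℂ := Matrix.diagonal (fun i => (Real.sqrt (p i) : ℂ)) with hD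
  set P : Matrix (Fin d) (Fin d) ℂ := Matrix.diagonal (fun i => (p i : ℂ)) with hP
  have hDD : D * D = P := by
    rw [hD, hP, Matrix.diagonal_mul_diagonal]
    refine congrArg Matrix.diagonal (funext fun i => ?_)
    rw [← Complex.ofReal_mul, Real.mul_self_sqrt (hp i)]
  have hρU : ρ = U * P * Uᴴ := by
    rw [hdec]
    ext k l
    rw [Matrix.sum_apply, Matrix.mul_apply]
    simp only [Matrix.smul_apply, Matrix.vecMulVec_apply, cconj, smul_eq_mul, hP,
      Matrix.mul_diagonal, Matrix.conjTranspose_apply, hU_def, Matrix.of_apply]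
    refine Finset.sum_congr rfl fun i _ => ?_
    ring
  have hDpsd : D.PosSemidef := by
    rw [hD]
    refine Matrix.posSemidef_diagonal_iff.mpr fun i => ?_
    simpa using Complex.ofReal_nonneg.mpr (Real.sqrt_nonneg (p i))
  have hUDU_psd : (U * D * Uᴴ).PosSemidef := hDpsd.mul_mul_conjTranspose_same U
  have hsqρ : msqrt ρ = U * D * Uᴴ := by
    rw [msqrt_of_psd hPSD]
    refine (hUDU_psd.eq_sqrt_of_sq_eq hPSD ?_).symm
    rw [pow_two, hρU]
    calc U * D * Uᴴ * (U * D * Uᴴ) = U * (D * ((Uᴴ * U) * (D * Uᴴ))) := by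
          simp only [Matrix.mul_assoc]
      _ = U * P * Uᴴ := by
          rw [hUU, Matrix.one_mul, ← Matrix.mul_assoc D D Uᴴ, hDD, Matrix.mul_assoc]
  have hρT : ρᵀ = U.map star * P * Uᵀ := by
    rw [hρU, Matrix.transpose_mul, Matrix.transpose_mul]
    rw [show (Uᴴ)ᵀ = U.map star by ext i j; simp [Matrix.conjTranspose_apply]]
    rw [show Pᵀ = P by rw [hP, Matrix.diagonal_transpose]]
    simp only [Matrix.mul_assoc]
  have hA' : A = D * (Uᴴ * U.map star) * D := by
    ext i j
    rw [Matrix.mul_diagonal, Matrix.diagonal_mul, hA i j, Real.sqrt_mul (hp i),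
      Complex.ofReal_mul, Matrix.mul_apply]
    simp only [hinner, cconj, Matrix.conjTranspose_apply, Matrix.map_apply, hU_def,
      Matrix.of_apply, Finset.mul_sum, Finset.sum_mul]
    refine Finset.sum_congr rfl fun k _ => ?_
    ring
  have hAstar : A.map star = D * (Uᵀ * U) * D := by
    ext i j
    rw [Matrix.map_apply, Matrix.mul_diagonal, Matrix.diagonal_mul, hA i j,
      Real.sqrt_mul (hp i), Complex.ofReal_mul, Matrix.mul_apply]
    simp only [hinner, cconj, Matrix.transpose_apply, hU_def, Matrix.of_apply,
      star_mul', star_sum, star_star, Complex.star_def, Complex.conj_ofReal,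
      RingHomCompTriple.comp_apply, Complex.conj_conj, RingHom.id_apply,
      Finset.mul_sum, Finset.sum_mul]
    refine Finset.sum_congr rfl fun k _ => ?_
    ring
  set N : Matrix (Fin d) (Fin d) ℂ := A * A.map star with hN
  have hM : msqrt ρ * ρᵀ * msqrt ρ = U * N * Uᴴ := by
    rw [hsqρ, hρT, hN, hAstar, hA', ← hDD]
    simp only [Matrix.mul_assoc]
  have hsq3 : (msqrt ρ)ᴴ = msqrt ρ := by
    rw [msqrt_of_psd hPSD]; exact hPSD.posSemidef_sqrt.1
  have hMpsd : (msqrt ρ * ρᵀ * msqrt ρ).PosSemidef := by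
    have h2 := (hPSD.transpose).mul_mul_conjTranspose_same (msqrt ρ)
    rwa [hsq3] at h2
  have hNpsd : N.PosSemidef := by
    have h2 := hMpsd.conjTranspose_mul_mul_same U
    rwa [hM, show Uᴴ * (U * N * Uᴴ) * U = (Uᴴ * U) * N * (Uᴴ * U) by
      simp only [Matrix.mul_assoc], hUU, Matrix.one_mul, Matrix.mul_one] at h2
  -- part 2
  have part2 : ∀ i j, (A * A.map star) i j
      = hinner (ψ i) ((msqrt ρ * ρᵀ * msqrt ρ).mulVec (ψ j)) := by
    intro i j
    have : (A * A.map star) i j = (Uᴴ * (msqrt ρ * ρᵀ * msqrt ρ) * U) i j := by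
      rw [hM, show Uᴴ * (U * N * Uᴴ) * U = (Uᴴ * U) * N * (Uᴴ * U) by
        simp only [Matrix.mul_assoc], hUU, Matrix.one_mul, Matrix.mul_one, hN]
    rw [this, Matrix.mul_apply]
    simp only [Matrix.mul_apply, Matrix.conjTranspose_apply, hU_def, Matrix.of_apply,
      hinner, Matrix.mulVec, dotProduct, Finset.sum_mul, Finset.mul_sum]
    rw [Finset.sum_comm]
    refine Finset.sum_congr rfl fun k _ => ?_
    refine Finset.sum_congr rfl fun l _ => ?_
    refine Finset.sum_congr rfl fun a _ => ?_
    refine Finset.sum_congr rfl fun b _ => ?_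
    ring
  refine ⟨?_, part2⟩
  -- part 1
  have hsqM : msqrt (msqrt ρ * ρᵀ * msqrt ρ) = U * hNpsd.sqrt * Uᴴ := by
    rw [msqrt_of_psd hMpsd]
    refine ((hNpsd.posSemidef_sqrt.mul_mul_conjTranspose_same U).eq_sqrt_of_sq_eq hMpsd
      ?_).symm
    rw [pow_two, hM]
    calc U * hNpsd.sqrt * Uᴴ * (U * hNpsd.sqrt * Uᴴ)
        = U * (hNpsd.sqrt * ((Uᴴ * U) * (hNpsd.sqrt * Uᴴ))) := by
          simp only [Matrix.mul_assoc]
      _ = U * (hNpsd.sqrt * hNpsd.sqrt) * Uᴴ := by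
          rw [hUU, Matrix.one_mul]
          simp only [Matrix.mul_assoc]
      _ = U * N * Uᴴ := by rw [hNpsd.sqrt_mul_self]
  have htr1 : (msqrt (msqrt ρ * ρᵀ * msqrt ρ)).trace = hNpsd.sqrt.trace := by
    rw [hsqM, Matrix.trace_mul_cycle, hUU, Matrix.one_mul]
  -- relate N to Aᴴ * A via conjugation
  have hAsym : Aᵀ = A := by
    ext i j
    rw [Matrix.transpose_apply, hA i j, hA j i, mul_comm (p j) (p i)]
    simp only [hinner, cconj]
    congr 1
    exact Finset.sum_congr rfl fun k _ => by ring
  set K : Matrix (Fin d) (Fin d) ℂ := Aᴴ * A with hK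
  have hKpsd : K.PosSemidef := Matrix.posSemidef_conjTranspose_mul_self A
  have h1 : (Aᴴ).map star = A := by
    ext i j
    rw [Matrix.map_apply, Matrix.conjTranspose_apply, star_star]
    conv_rhs => rw [← hAsym]
    rw [Matrix.transpose_apply]
  have h2 : A.map star = Aᴴ := by
    ext i j
    rw [Matrix.map_apply, Matrix.conjTranspose_apply]
    conv_rhs => rw [← hAsym, Matrix.transpose_apply]
  have hNK : N = K.map star := by
    rw [hN, h2, hK, map_star_mul', h1, h2]
  have hsqrtK_herm : hKpsd.sqrt.IsHermitian := hKpsd.posSemidef_sqrt.1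
  have hNsqrt : hNpsd.sqrt = hKpsd.sqrt.map star := by
    have hpsd : (hKpsd.sqrt.map star).PosSemidef := by
      rw [map_star_of_hermitian hsqrtK_herm]
      exact hKpsd.posSemidef_sqrt.transpose
    refine (hpsd.eq_sqrt_of_sq_eq hNpsd ?_).symm
    rw [pow_two, ← map_star_mul', hKpsd.sqrt_mul_self, hNK]
  have htr2 : hNpsd.sqrt.trace = star hKpsd.sqrt.trace := by
    rw [hNsqrt, Matrix.trace, Matrix.trace, star_sum]
    exact Finset.sum_congr rfl fun i _ => rfl
  have htr3 : hKpsd.sqrt.trace = ∑ i, (Real.sqrt (hKpsd.1.eigenvalues i) : ℂ) :=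
    trace_sqrt hKpsd
  rw [rootFid, htr1, htr2, Complex.star_def, Complex.conj_re, htr3]
  rw [Complex.re_sum]
  refine Finset.sum_congr rfl fun i _ => ?_
  rw [Complex.ofReal_re]
  rfl
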